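/- Let (X_j)_{j≥1} be an i.i.d. sequence of random variables on a probability space such that each X_j − μ has sub-Gaussian moment generating function with variance proxy σ² (i.e., E[exp(s(X_j − μ))] ≤ exp(s²σ²/2) for all real s). Then the probability that there exists an integer n ≥ 1 with |(1/n)·Σ_{j=1}^n X_j − μ| ≥ β(n) is at most δ/K. -/

import Mathlib

open Real MeasureTheory ProbabilityTheory

/-- `β(n) = sqrt((2σ²/n) · log(π²·K·n²/(3δ)))` for integers `n ≥ 1`. -/
noncomputable def attackBeta (σ : ℝ) (K : ℕ) (δ : ℝ) (n : ℕ) : ℝ :=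
  Real.sqrt (2 * σ ^ 2 / n * Real.log (Real.pi ^ 2 * K * n ^ 2 / (3 * δ)))

section Aux

variable {Ω : Type*} [MeasureSpace Ω] [IsProbabilityMeasure (ℙ : Measure Ω)]

/-- MGF bound for a sum of independent sub-Gaussian (centered) variables. -/
lemma mgf_sum_le_aux (σ : ℝ) (Y : ℕ → Ω → ℝ)
    (hmeas : ∀ j, Measurable (Y j))
    (hindep : iIndepFun Y ℙ)
    (hsub : ∀ j (s : ℝ), mgf (Y j) ℙ s ≤ Real.exp (s ^ 2 * σ ^ 2 / 2))
    (n : ℕ) (t : ℝ) :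
    mgf (∑ j ∈ Finset.Icc 1 n, Y j) ℙ t ≤ Real.exp (n * (t ^ 2 * σ ^ 2 / 2)) := by
  rw [hindep.mgf_sum hmeas]
  calc ∏ j ∈ Finset.Icc 1 n, mgf (Y j) ℙ t
      ≤ ∏ _j ∈ Finset.Icc 1 n, Real.exp (t ^ 2 * σ ^ 2 / 2) :=
        Finset.prod_le_prod (fun j _ => mgf_nonneg) (fun j _ => hsub j t)
    _ = Real.exp (t ^ 2 * σ ^ 2 / 2) ^ n := by
        rw [Finset.prod_const, Nat.card_Icc]; norm_num
    _ = Real.exp (n * (t ^ 2 * σ ^ 2 / 2)) := by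
        rw [← Real.exp_nat_mul]

end Aux

set_option maxHeartbeats 1000000 in
/-- For an i.i.d. sequence of `σ²`-sub-Gaussian random variables, the probability
that there exists some `n ≥ 1` at which the empirical mean of the first `n`
variables deviates from `μ` by at least `β(n)` is at most `δ/K`. -/
theorem subgaussian_uniform_concentration
    {Ω : Type*} [MeasureSpace Ω] [IsProbabilityMeasure (ℙ : Measure Ω)]
    (σ : ℝ) (K : ℕ) (δ : ℝ) (hσ : 0 < σ) (hK : 1 ≤ K) (hδ : 0 < δ) (hδ' : δ ≤ 1 / 2)
    (μ : ℝ) (X : ℕ → Ω → ℝ)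
    (hmeas : ∀ j, Measurable (X j))
    (hindep : iIndepFun X ℙ)
    (hident : ∀ j, IdentDistrib (X j) (X 1) ℙ ℙ)
    (hint : ∀ j (s : ℝ), Integrable (fun ω => Real.exp (s * (X j ω - μ))) ℙ)
    (hsub : ∀ j (s : ℝ), ∫ ω, Real.exp (s * (X j ω - μ)) ≤ Real.exp (s ^ 2 * σ ^ 2 / 2)) :
    ℙ {ω | ∃ n : ℕ, 1 ≤ n ∧
        attackBeta σ K δ n ≤ |(∑ j ∈ Finset.Icc 1 n, X j ω) / n - μ|} ≤
      ENNReal.ofReal (δ / K) := by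
  have hπ : (3 : ℝ) < Real.pi := Real.pi_gt_three
  have hK0 : (0 : ℝ) < K := by exact_mod_cast Nat.lt_of_lt_of_le Nat.zero_lt_one hK
  have hK1 : (1 : ℝ) ≤ K := by exact_mod_cast hK
  -- centered variables
  set Y : ℕ → Ω → ℝ := fun j ω => X j ω - μ with hY
  have hYmeas : ∀ j, Measurable (Y j) := fun j => (hmeas j).sub measurable_const
  have hYindep : iIndepFun Y ℙ :=
    hindep.comp (fun _ x => x - μ) (fun _ => measurable_id.sub measurable_const)
  have hYsub : ∀ j (s : ℝ), mgf (Y j) ℙ s ≤ Real.exp (s ^ 2 * σ ^ 2 / 2) := fun j s => hsub j s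
  set a : ℝ := 6 * δ / (Real.pi ^ 2 * K) with ha
  -- the events
  set C : ℕ → Set Ω := fun n =>
    {ω | 1 ≤ n ∧ attackBeta σ K δ n ≤ |(∑ j ∈ Finset.Icc 1 n, X j ω) / n - μ|} with hC
  have hset : {ω | ∃ n : ℕ, 1 ≤ n ∧
      attackBeta σ K δ n ≤ |(∑ j ∈ Finset.Icc 1 n, X j ω) / n - μ|} = ⋃ n, C n := by
    ext ω; simp [hC, Set.mem_iUnion]
  -- per-n bound
  have hbound : ∀ n : ℕ, ℙ (C n) ≤ ENNReal.ofReal (a * (1 / (n : ℝ) ^ 2)) := by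
    intro n
    rcases Nat.eq_zero_or_pos n with h0 | hn
    · have : C n = ∅ := by
        ext ω; simp [hC, h0]
      simp [this]
    have hn1 : (1 : ℝ) ≤ n := by exact_mod_cast hn
    have hn0 : (0 : ℝ) < n := by linarith
    set β : ℝ := attackBeta σ K δ n with hβ
    set A : ℝ := Real.pi ^ 2 * K * n ^ 2 / (3 * δ) with hA
    have hA1 : (1 : ℝ) ≤ A := by
      have hn2 : (1 : ℝ) ≤ (n : ℝ) ^ 2 := by nlinarith
      have h9 : (9 : ℝ) ≤ Real.pi ^ 2 := by nlinarith
      have h1 : (9 : ℝ) ≤ Real.pi ^ 2 * K := by nlinarith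
      have h2 : (9 : ℝ) ≤ Real.pi ^ 2 * K * n ^ 2 := by nlinarith
      rw [hA, le_div_iff₀ (by linarith)]
      linarith
    have hL : (0 : ℝ) ≤ Real.log A := Real.log_nonneg hA1
    set L : ℝ := Real.log A with hLdef
    have hβsq : β ^ 2 = 2 * σ ^ 2 / n * L := by
      rw [hβ, attackBeta, Real.sq_sqrt]
      exact mul_nonneg (by positivity) hL
    have hβ0 : 0 ≤ β := Real.sqrt_nonneg _
    set S : Ω → ℝ := fun ω => ∑ j ∈ Finset.Icc 1 n, Y j ω with hS
    have hSmeas : (∑ j ∈ Finset.Icc 1 n, Y j) = S := by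
      ext ω; simp [hS, Finset.sum_apply]
    set ε : ℝ := n * β with hε
    have hε0 : 0 ≤ ε := by positivity
    set t : ℝ := β / σ ^ 2 with ht
    have ht0 : 0 ≤ t := by positivity
    -- exponent calculation
    have hexp : -t * ε + n * (t ^ 2 * σ ^ 2 / 2) = -L := by
      have hnβ : (n : ℝ) * β ^ 2 = 2 * σ ^ 2 * L := by
        rw [hβsq]; field_simp
      have hσ2 : (σ : ℝ) ^ 2 ≠ 0 := by positivity
      field_simp [ht, hε]
      have hts : t * σ ^ 2 = β := by rw [ht]; field_simp
      have h3 : t * (n * β) = 2 * L := by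
        have : t * (n * β) * σ ^ 2 = 2 * L * σ ^ 2 := by
          linear_combination (n : ℝ) * β * hts + hnβ
        exact mul_right_cancel₀ hσ2 this
      linear_combination (-2 * t) * hε + t * n * hts - h3
    have hr : Real.exp (-L) = 3 * δ / (Real.pi ^ 2 * K * n ^ 2) := by
      rw [Real.exp_neg, hLdef, Real.exp_log (by linarith : (0:ℝ) < A), hA]
      rw [inv_div]
    -- integrability of exp(s * S) for any s
    have hSint : ∀ s : ℝ, Integrable (fun ω => Real.exp (s * S ω)) ℙ := by
      intro s
      have := hYindep.integrable_exp_mul_sum (t := s) hYmeas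
        (s := Finset.Icc 1 n) (fun j _ => hint j s)
      rwa [hSmeas] at this
    -- mgf bound
    have hmgf : ∀ s : ℝ, mgf S ℙ s ≤ Real.exp (n * (s ^ 2 * σ ^ 2 / 2)) := by
      intro s
      have := mgf_sum_le_aux σ Y hYmeas hYindep hYsub n s
      rwa [hSmeas] at this
    -- upper tail
    have hup : (ℙ {ω | ε ≤ S ω}).toReal ≤ Real.exp (-L) := by
      calc (ℙ {ω | ε ≤ S ω}).toReal ≤ Real.exp (-t * ε) * mgf S ℙ t :=
            measure_ge_le_exp_mul_mgf ε ht0 (hSint t)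
        _ ≤ Real.exp (-t * ε) * Real.exp (n * (t ^ 2 * σ ^ 2 / 2)) :=
            mul_le_mul_of_nonneg_left (hmgf t) (Real.exp_nonneg _)
        _ = Real.exp (-t * ε + n * (t ^ 2 * σ ^ 2 / 2)) := (Real.exp_add _ _).symm
        _ = Real.exp (-L) := by rw [hexp]
    -- lower tail
    have hlo : (ℙ {ω | S ω ≤ -ε}).toReal ≤ Real.exp (-L) := by
      calc (ℙ {ω | S ω ≤ -ε}).toReal ≤ Real.exp (-(-t) * (-ε)) * mgf S ℙ (-t) :=
            measure_le_le_exp_mul_mgf (-ε) (by linarith) (by simpa using hSint (-t))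
        _ ≤ Real.exp (-t * ε) * Real.exp (n * (t ^ 2 * σ ^ 2 / 2)) := by
            have h1 : -(-t) * (-ε) = -t * ε := by ring
            rw [h1]
            refine mul_le_mul_of_nonneg_left ?_ (Real.exp_nonneg _)
            have := hmgf (-t)
            simpa using this
        _ = Real.exp (-t * ε + n * (t ^ 2 * σ ^ 2 / 2)) := (Real.exp_add _ _).symm
        _ = Real.exp (-L) := by rw [hexp]
    -- inclusion
    have hincl : C n ⊆ {ω | ε ≤ S ω} ∪ {ω | S ω ≤ -ε} := by
      intro ω hω
      obtain ⟨-, habs⟩ := hω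
      have hSsum : S ω = (∑ j ∈ Finset.Icc 1 n, X j ω) - n * μ := by
        simp only [hS, hY, Finset.sum_sub_distrib, Finset.sum_const, Nat.card_Icc,
          nsmul_eq_mul]
        simp
      have hSval : (∑ j ∈ Finset.Icc 1 n, X j ω) / n - μ = S ω / n := by
        rw [hSsum]; field_simp
      rw [hSval, abs_div, abs_of_pos hn0] at habs
      have hεabs : ε ≤ |S ω| := by
        rw [hε]
        calc (n : ℝ) * β ≤ n * (|S ω| / n) := by gcongr
          _ = |S ω| := by field_simp
      rcases le_abs.mp hεabs with h | h
      · exact Or.inl h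
      · exact Or.inr (le_neg.mp h)
    -- combine
    have h2r : Real.exp (-L) + Real.exp (-L) = a * (1 / (n : ℝ) ^ 2) := by
      rw [hr, ha]
      field_simp
      ring
    calc ℙ (C n) ≤ ℙ ({ω | ε ≤ S ω} ∪ {ω | S ω ≤ -ε}) := measure_mono hincl
      _ ≤ ℙ {ω | ε ≤ S ω} + ℙ {ω | S ω ≤ -ε} := measure_union_le _ _
      _ ≤ ENNReal.ofReal (Real.exp (-L)) + ENNReal.ofReal (Real.exp (-L)) := by
          gcongr
          · exact (ENNReal.le_ofReal_iff_toReal_le (measure_ne_top _ _)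
              (Real.exp_nonneg _)).mpr hup
          · exact (ENNReal.le_ofReal_iff_toReal_le (measure_ne_top _ _)
              (Real.exp_nonneg _)).mpr hlo
      _ = ENNReal.ofReal (Real.exp (-L) + Real.exp (-L)) :=
          (ENNReal.ofReal_add (Real.exp_nonneg _) (Real.exp_nonneg _)).symm
      _ = ENNReal.ofReal (a * (1 / (n : ℝ) ^ 2)) := by rw [h2r]
  -- sum up
  have hπ0 : Real.pi ≠ 0 := by positivity
  have hsum : HasSum (fun n : ℕ => a * (1 / (n : ℝ) ^ 2)) (δ / K) := by
    have := hasSum_zeta_two.mul_left a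
    have heq : a * (Real.pi ^ 2 / 6) = δ / K := by
      rw [ha]; field_simp
    rwa [heq] at this
  have hnonneg : ∀ n : ℕ, 0 ≤ a * (1 / (n : ℝ) ^ 2) := by
    intro n; positivity
  calc ℙ {ω | ∃ n : ℕ, 1 ≤ n ∧
        attackBeta σ K δ n ≤ |(∑ j ∈ Finset.Icc 1 n, X j ω) / n - μ|}
      = ℙ (⋃ n, C n) := by rw [hset]
    _ ≤ ∑' n, ℙ (C n) := measure_iUnion_le _
    _ ≤ ∑' n : ℕ, ENNReal.ofReal (a * (1 / (n : ℝ) ^ 2)) := ENNReal.tsum_le_tsum hbound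
    _ = ENNReal.ofReal (∑' n : ℕ, a * (1 / (n : ℝ) ^ 2)) :=
        (ENNReal.ofReal_tsum_of_nonneg hnonneg hsum.summable).symm
    _ = ENNReal.ofReal (δ / K) := by rw [hsum.tsum_eq]
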